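/- arXiv:1403.1155 — 3 statements merged into one kernel-verified Lean document; each statement's English description precedes it below -/
import Mathlib

section
/- Let R be a commutative ring and M an R-module such that Ext^1_R(M, E) = 0 for every Gorenstein injective R-module E. Then Ext^i_R(M, E) = 0 for all i ≥ 1 and all Gorenstein injective R-modules E. -/
open CategoryTheory Opposite Limits MonoidalCategory

universe u

variable {R : Type u} [CommRing R]

/-- `Q` is a Gorenstein projective module: it is the cokernel `Coker (P₁ → P₀)` of a totally
acyclic complex of projective modules, i.e. an exact complex of projectives which stays exact
under `Hom(-, P)` for every projective `P`. -/
def IsGorensteinProjective (Q : ModuleCat.{u} R) : Prop :=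
  ∃ C : ChainComplex (ModuleCat.{u} R) ℤ,
    (∀ i, Projective (C.X i)) ∧
    (∀ i, C.ExactAt i) ∧
    Nonempty (Q ≅ cokernel (C.d 1 0)) ∧
    ∀ P : ModuleCat.{u} R, Projective P →
      ∀ (i : ℤ) (f : C.X i ⟶ P), C.d (i + 1) i ≫ f = 0 →
        ∃ g : C.X (i - 1) ⟶ P, f = C.d i (i - 1) ≫ g

/-- `E` is a Gorenstein injective module: it is the kernel `Ker (I⁰ → I¹)` of a totally acyclic
complex of injective modules, i.e. an exact complex of injectives which stays exact under
`Hom(I, -)` for every injective `I`. -/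
def IsGorensteinInjective (E : ModuleCat.{u} R) : Prop :=
  ∃ C : CochainComplex (ModuleCat.{u} R) ℤ,
    (∀ i, Injective (C.X i)) ∧
    (∀ i, C.ExactAt i) ∧
    Nonempty (E ≅ kernel (C.d 0 1)) ∧
    ∀ I : ModuleCat.{u} R, Injective I →
      ∀ (i : ℤ) (f : I ⟶ C.X i), f ≫ C.d i (i + 1) = 0 →
        ∃ g : I ⟶ C.X (i - 1), f = g ≫ C.d (i - 1) i

/-- `M` is a Gorenstein flat module: it is a cokernel in an exact complex of flat modules which
remains exact after tensoring with any injective module. -/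
def IsGorensteinFlat (M : ModuleCat.{u} R) : Prop :=
  ∃ C : ChainComplex (ModuleCat.{u} R) ℤ,
    (∀ i, Module.Flat R (C.X i)) ∧
    (∀ i, C.ExactAt i) ∧
    Nonempty (M ≅ cokernel (C.d 1 0)) ∧
    ∀ I : ModuleCat.{u} R, Injective I → ∀ i : ℤ,
      (((tensorLeft I).mapHomologicalComplex (ComplexShape.down ℤ)).obj C).ExactAt i

/-- A short exact sequence `0 → X₁ → X₂ → X₃ → 0` is `𝒳`-pure exact if
`Hom(U, X₂) → Hom(U, X₃)` is surjective for every `U ∈ 𝒳`. -/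
def XPureExact (𝒳 : ModuleCat.{u} R → Prop) (S : ShortComplex (ModuleCat.{u} R)) : Prop :=
  ∀ U : ModuleCat.{u} R, 𝒳 U → ∀ φ : U ⟶ S.X₃, ∃ ψ : U ⟶ S.X₂, ψ ≫ S.g = φ

/-- A short exact sequence `0 → X₁ → X₂ → X₃ → 0` is `𝒳`-copure exact if
`Hom(X₂, V) → Hom(X₁, V)` is surjective for every `V ∈ 𝒳`. -/
def XCopureExact (𝒳 : ModuleCat.{u} R → Prop) (S : ShortComplex (ModuleCat.{u} R)) : Prop :=
  ∀ V : ModuleCat.{u} R, 𝒳 V → ∀ φ : S.X₁ ⟶ V, ∃ ψ : S.X₂ ⟶ V, S.f ≫ ψ = φ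

/-- `M` is `𝒳`-pure flat: `M ⊗ -` leaves every `𝒳`-pure exact short exact sequence exact. -/
def XPureFlat (𝒳 : ModuleCat.{u} R → Prop) (M : ModuleCat.{u} R) : Prop :=
  ∀ S : ShortComplex (ModuleCat.{u} R), S.ShortExact → XPureExact 𝒳 S →
    Function.Injective ((tensorLeft M).map S.f)

/-- `N` is `𝒳`-pure injective: `Hom(-, N)` leaves every `𝒳`-pure exact short exact
sequence exact. -/
def XPureInjective (𝒳 : ModuleCat.{u} R → Prop) (N : ModuleCat.{u} R) : Prop :=
  ∀ S : ShortComplex (ModuleCat.{u} R), S.ShortExact → XPureExact 𝒳 S →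
    ∀ φ : S.X₁ ⟶ N, ∃ ψ : S.X₂ ⟶ N, S.f ≫ ψ = φ

/-- `M` is `𝒳`-pure projective: `Hom(M, -)` leaves every `𝒳`-pure exact short exact
sequence exact. -/
def XPureProjective (𝒳 : ModuleCat.{u} R → Prop) (M : ModuleCat.{u} R) : Prop :=
  ∀ S : ShortComplex (ModuleCat.{u} R), S.ShortExact → XPureExact 𝒳 S →
    ∀ φ : M ⟶ S.X₃, ∃ ψ : M ⟶ S.X₂, ψ ≫ S.g = φ

/-- `GP`-pure exactness: `Hom(Q, -)` leaves the sequence exact for all Gorenstein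
projective `Q`. -/
abbrev GPPureExact (S : ShortComplex (ModuleCat.{u} R)) : Prop :=
  XPureExact IsGorensteinProjective S

/-- `GI`-copure exactness: `Hom(-, E)` leaves the sequence exact for all Gorenstein
injective `E`. -/
abbrev GICopureExact (S : ShortComplex (ModuleCat.{u} R)) : Prop :=
  XCopureExact IsGorensteinInjective S

abbrev GPPureProjective (M : ModuleCat.{u} R) : Prop :=
  XPureProjective IsGorensteinProjective M

abbrev GPPureInjective (M : ModuleCat.{u} R) : Prop :=
  XPureInjective IsGorensteinProjective M

abbrev GPPureFlat (M : ModuleCat.{u} R) : Prop :=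
  XPureFlat IsGorensteinProjective M

/-- `Ext^n_R(M, N)` vanishes. -/
abbrev extVanish (n : ℕ) (M N : ModuleCat.{u} R) : Prop :=
  Subsingleton (((Ext R (ModuleCat.{u} R) n).obj (op M)).obj N)

/-- `M` belongs to `GP^⊥`. -/
abbrev MemGPperp (M : ModuleCat.{u} R) : Prop :=
  ∀ Q : ModuleCat.{u} R, IsGorensteinProjective Q → extVanish 1 Q M

/-- `M` belongs to `^⊥GI`. -/
abbrev MemPerpGI (M : ModuleCat.{u} R) : Prop :=
  ∀ E : ModuleCat.{u} R, IsGorensteinInjective E → extVanish 1 M E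

/-- Gorenstein projective dimension of `M` is at most `n`: there is a resolution
`0 → G_n → ⋯ → G_0 → M → 0` by Gorenstein projective modules. -/
def GpdLE : ℕ → ModuleCat.{u} R → Prop
  | 0, M => IsGorensteinProjective M
  | n + 1, M =>
    ∃ S : ShortComplex (ModuleCat.{u} R), S.ShortExact ∧ Nonempty (S.X₃ ≅ M) ∧
      IsGorensteinProjective S.X₂ ∧ GpdLE n S.X₁

/-- Gorenstein injective dimension of `M` is at most `n`: there is a coresolution
`0 → M → E⁰ → ⋯ → Eⁿ → 0` by Gorenstein injective modules. -/
def GidLE : ℕ → ModuleCat.{u} R → Prop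
  | 0, M => IsGorensteinInjective M
  | n + 1, M =>
    ∃ S : ShortComplex (ModuleCat.{u} R), S.ShortExact ∧ Nonempty (S.X₁ ≅ M) ∧
      IsGorensteinInjective S.X₂ ∧ GidLE n S.X₃

/-- Gorenstein flat dimension of `M` is at most `n`. -/
def GfdLE : ℕ → ModuleCat.{u} R → Prop
  | 0, M => IsGorensteinFlat M
  | n + 1, M =>
    ∃ S : ShortComplex (ModuleCat.{u} R), S.ShortExact ∧ Nonempty (S.X₃ ≅ M) ∧
      IsGorensteinFlat S.X₂ ∧ GfdLE n S.X₁

/-- The Pontryagin dual `M⁺ = Hom_ℤ(M, ℚ/ℤ)` as an `R`-module. -/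
noncomputable def characterDual (M : ModuleCat.{u} R) : ModuleCat.{u} R :=
  ModuleCat.of R (CharacterModule M)

/-- `R` is a coherent ring: every finitely generated ideal is finitely presented. -/
def IsCoherentRing (R : Type u) [CommRing R] : Prop :=
  ∀ I : Ideal R, I.FG → Module.FinitePresentation R I

/-- `φ : G → M` is a Gorenstein projective precover. -/
def IsGPPrecover {G M : ModuleCat.{u} R} (φ : G ⟶ M) : Prop :=
  IsGorensteinProjective G ∧
    ∀ G' : ModuleCat.{u} R, IsGorensteinProjective G' →
      ∀ ψ : G' ⟶ M, ∃ χ : G' ⟶ G, χ ≫ φ = ψ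

/-- The short exact sequence `0 → Im d_{i+1} → X_i → Im d_i → 0` extracted from a complex. -/
noncomputable def imagesShortComplex (C : ChainComplex (ModuleCat.{u} R) ℤ) (i : ℤ) :
    ShortComplex (ModuleCat.{u} R) :=
  ShortComplex.mk (image.ι (C.d (i + 1) i)) (factorThruImage (C.d i (i - 1)))
    (by
      rw [← cancel_epi (factorThruImage (C.d (i + 1) i)),
        ← cancel_mono (image.ι (C.d i (i - 1)))]
      simp)

section AuxHelpers

lemma subsingleton_of_isZero' {X : ModuleCat.{u} R} (h : IsZero X) : Subsingleton X := by
  refine ⟨fun a b => ?_⟩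
  have h1 : (𝟙 X : X ⟶ X) = 0 := h.eq_of_src _ _
  have key : ∀ x : X, x = 0 := fun x => by
    conv_lhs => rw [show x = (𝟙 X : X ⟶ X) x from rfl]
    rw [h1]; rfl
  rw [key a, key b]

lemma subsingleton_congr' {X Y : ModuleCat.{u} R} (e : X ≅ Y) (h : Subsingleton Y) :
    Subsingleton X :=
  @Equiv.subsingleton _ _ (((forget (ModuleCat.{u} R)).mapIso e).toEquiv) h

lemma extVanish_congr' {n : ℕ} {M Y Z : ModuleCat.{u} R} (e : Y ≅ Z)
    (h : Subsingleton (((Ext R (ModuleCat.{u} R) n).obj (op M)).obj Y)) :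
    Subsingleton (((Ext R (ModuleCat.{u} R) n).obj (op M)).obj Z) :=
  subsingleton_congr' (((Ext R (ModuleCat.{u} R) n).obj (op M)).mapIso e).symm h

lemma extVanish_iff_isZero_homology' {M : ModuleCat.{u} R} (P : ProjectiveResolution M)
    (n : ℕ) (Y : ModuleCat.{u} R) :
    Subsingleton (((Ext R (ModuleCat.{u} R) n).obj (op M)).obj Y) ↔
      IsZero ((P.complex.linearYonedaObj R Y).homology n) := by
  constructor
  · intro h
    have := subsingleton_congr' (P.isoExt n Y).symm h
    exact ModuleCat.isZero_of_subsingleton _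
  · intro h
    exact subsingleton_congr' (P.isoExt n Y) (subsingleton_of_isZero' h)

/-- postcomposition chain map `Hom(P•, Y) ⟶ Hom(P•, Z)`. -/
noncomputable def homPostcomp (X : ChainComplex (ModuleCat.{u} R) ℕ)
    {Y Z : ModuleCat.{u} R} (φ : Y ⟶ Z) :
    X.linearYonedaObj R Y ⟶ X.linearYonedaObj R Z where
  f i := ModuleCat.ofHom (Linear.rightComp R (X.X i) φ)
  comm' i j _ := by
    ext (α : X.X i ⟶ Y)
    simp [ChainComplex.linearYonedaObj_d]
    rfl

noncomputable def homComplexSES (X : ChainComplex (ModuleCat.{u} R) ℕ)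
    (S : ShortComplex (ModuleCat.{u} R)) :
    ShortComplex (CochainComplex (ModuleCat.{u} R) ℕ) :=
  ShortComplex.mk (homPostcomp X S.f) (homPostcomp X S.g) (by
    ext i (α : X.X i ⟶ S.X₁)
    show (α ≫ S.f) ≫ S.g = 0
    rw [Category.assoc, S.zero, comp_zero])

lemma homComplexSES_shortExact (X : ChainComplex (ModuleCat.{u} R) ℕ)
    (hX : ∀ i, Projective (X.X i)) (S : ShortComplex (ModuleCat.{u} R))
    (hS : S.ShortExact) : (homComplexSES X S).ShortExact := by
  have := hS.mono_f
  have := hS.epi_g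
  rw [HomologicalComplex.shortExact_iff_degreewise_shortExact]
  intro i
  have hmono : Mono ((homComplexSES X S).map (HomologicalComplex.eval _ _ i)).f := by
    rw [ModuleCat.mono_iff_injective]
    intro (a : X.X i ⟶ S.X₁) (b : X.X i ⟶ S.X₁) hab
    exact (cancel_mono S.f).1 hab
  have hepi : Epi ((homComplexSES X S).map (HomologicalComplex.eval _ _ i)).g := by
    rw [ModuleCat.epi_iff_surjective]
    intro (ψ : X.X i ⟶ S.X₃)
    have := hX i
    exact ⟨Projective.factorThru ψ S.g, Projective.factorThru_comp ψ S.g⟩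
  refine ⟨?_⟩
  rw [ShortComplex.moduleCat_exact_iff]
  intro (ψ : X.X i ⟶ S.X₂) hψ
  exact hS.exact.lift' ψ hψ

end AuxHelpers

section Aux2

lemma isZero_homology_step {M : ModuleCat.{u} R} (P : ProjectiveResolution M)
    (S : ShortComplex (ModuleCat.{u} R)) (hS : S.ShortExact) (n : ℕ)
    (h3 : IsZero ((P.complex.linearYonedaObj R S.X₃).homology n))
    (h2 : IsZero ((P.complex.linearYonedaObj R S.X₂).homology (n+1))) :
    IsZero ((P.complex.linearYonedaObj R S.X₁).homology (n+1)) := by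
  have hses := homComplexSES_shortExact P.complex (fun i => P.projective i) S hS
  have hrel : (ComplexShape.up ℕ).Rel n (n+1) := rfl
  have hex := hses.homology_exact₁ n (n+1) hrel
  exact hex.isZero_X₂ (h3.eq_of_src _ _) (h2.eq_of_tgt _ _)

lemma isZero_homology_of_injective {M : ModuleCat.{u} R} (P : ProjectiveResolution M)
    (I : ModuleCat.{u} R) (hI : Injective I) (n : ℕ) :
    IsZero ((P.complex.linearYonedaObj R I).homology (n+1)) := by
  rw [← HomologicalComplex.exactAt_iff_isZero_homology]
  rw [HomologicalComplex.exactAt_iff' _ n (n+1) (n+2)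
    (CochainComplex.prev_nat_succ n) (CochainComplex.next ℕ (n+1))]
  rw [ShortComplex.moduleCat_exact_iff]
  intro (x : P.complex.X (n+1) ⟶ I) hx
  have hx' : P.complex.d (n+2) (n+1) ≫ x = 0 := hx
  have hw : P.complex.d (n+2) (n+1) ≫ factorThruImage (P.complex.d (n+1) n) = 0 := by
    rw [← cancel_mono (image.ι (P.complex.d (n+1) n)), Category.assoc, image.fac, zero_comp,
      HomologicalComplex.d_comp_d]
  have hbig : (ShortComplex.mk (P.complex.d (n+2) (n+1)) (P.complex.d (n+1) n)
      (P.complex.d_comp_d _ _ _)).Exact := by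
    have := P.complex_exactAt_succ n
    rwa [HomologicalComplex.exactAt_iff' _ (n+2) (n+1) n
      (ChainComplex.prev ℕ (n+1)) (ChainComplex.next_nat_succ n)] at this
  have hexact : (ShortComplex.mk (P.complex.d (n+2) (n+1))
      (factorThruImage (P.complex.d (n+1) n)) hw).Exact := by
    rw [ShortComplex.exact_iff_of_epi_of_isIso_of_mono
      (S₁ := ShortComplex.mk (P.complex.d (n+2) (n+1))
        (factorThruImage (P.complex.d (n+1) n)) hw)
      (S₂ := ShortComplex.mk (P.complex.d (n+2) (n+1)) (P.complex.d (n+1) n)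
        (P.complex.d_comp_d _ _ _))
      { τ₁ := 𝟙 _, τ₂ := 𝟙 _, τ₃ := image.ι (P.complex.d (n+1) n),
        comm₁₂ := by simp, comm₂₃ := by simp }]
    exact hbig
  refine ⟨Injective.factorThru (hexact.desc x hx') (image.ι (P.complex.d (n+1) n)), ?_⟩
  show P.complex.d (n+1) n ≫
      Injective.factorThru (hexact.desc x hx') (image.ι (P.complex.d (n+1) n)) = x
  have hstep : P.complex.d (n+1) n ≫
      Injective.factorThru (hexact.desc x hx') (image.ι (P.complex.d (n+1) n))
      = factorThruImage (P.complex.d (n+1) n) ≫ (image.ι (P.complex.d (n+1) n) ≫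
        Injective.factorThru (hexact.desc x hx') (image.ι (P.complex.d (n+1) n))) := by
    rw [← Category.assoc, image.fac]
  rw [hstep, Injective.comp_factorThru]
  exact hexact.g_desc x hx'

end Aux2

section Aux3


lemma d_eqToHom' (K : CochainComplex (ModuleCat.{u} R) ℤ) (a : ℤ) {b c : ℤ} (h : b = c) :
    K.d a b ≫ eqToHom (congrArg K.X h) = K.d a c := by subst h; simp

lemma eqToHom_d' (K : CochainComplex (ModuleCat.{u} R) ℤ) {a b : ℤ} (h : a = b) (c : ℤ) :
    eqToHom (congrArg K.X h) ≫ K.d b c = K.d a c := by subst h; simp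

/-- the shift of a `ℤ`-indexed cochain complex by one (no signs). -/
noncomputable def shifted (C : CochainComplex (ModuleCat.{u} R) ℤ) :
    CochainComplex (ModuleCat.{u} R) ℤ where
  X i := C.X (i + 1)
  d i j := C.d (i + 1) (j + 1)
  shape i j h := C.shape _ _ (by
    intro hc
    exact h (by simp only [ComplexShape.up_Rel] at hc ⊢; omega))
  d_comp_d' i j k _ _ := C.d_comp_d _ _ _

lemma shifted_gi (C : CochainComplex (ModuleCat.{u} R) ℤ)
    (hinj : ∀ i, Injective (C.X i)) (hexact : ∀ i, C.ExactAt i)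
    (hlift : ∀ I : ModuleCat.{u} R, Injective I →
      ∀ (i : ℤ) (f : I ⟶ C.X i), f ≫ C.d i (i + 1) = 0 →
        ∃ g : I ⟶ C.X (i - 1), f = g ≫ C.d (i - 1) i) :
    IsGorensteinInjective (kernel (C.d 1 2)) := by
  refine ⟨shifted C, fun i => hinj (i + 1), ?_, ⟨Iso.refl _⟩, ?_⟩
  · intro i
    rw [HomologicalComplex.exactAt_iff' _ (i-1) i (i+1)
      (CochainComplex.prev ℤ i) (CochainComplex.next ℤ i)]
    have := hexact (i + 1)
    rw [HomologicalComplex.exactAt_iff' _ i (i+1) (i+2)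
      (by rw [CochainComplex.prev]; omega) (by rw [CochainComplex.next]; omega)] at this
    have e1 : C.X i = C.X (i - 1 + 1) := by congr 1; omega
    have e3 : C.X (i + 2) = C.X (i + 1 + 1) := by congr 1; omega
    have pf1 : eqToHom e1 ≫ C.d (i-1+1) (i+1) = C.d i (i+1) ≫ 𝟙 (C.X (i+1)) := by
      rw [eqToHom_d' C (by omega : i = i - 1 + 1), Category.comp_id]
    have pf2 : 𝟙 (C.X (i+1)) ≫ C.d (i+1) (i+1+1) = C.d (i+1) (i+2) ≫ eqToHom e3 := by
      rw [Category.id_comp, d_eqToHom' C (i+1) (by omega : i + 2 = i + 1 + 1)]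
    exact ShortComplex.exact_of_iso
      (ShortComplex.isoMk (S₁ := HomologicalComplex.sc' C i (i+1) (i+2))
        (S₂ := HomologicalComplex.sc' (shifted C) (i-1) i (i+1))
        (eqToIso e1) (Iso.refl _) (eqToIso e3) pf1 pf2) this
  · intro I hI i f hf
    obtain ⟨g, hg⟩ := hlift I hI (i + 1) f hf
    refine ⟨g ≫ eqToHom (congrArg C.X (by omega : i + 1 - 1 = i - 1 + 1)), ?_⟩
    show f = _ ≫ C.d (i - 1 + 1) (i + 1)
    erw [Category.assoc, eqToHom_d' C (by omega : i + 1 - 1 = i - 1 + 1)]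
    exact hg

end Aux3

lemma gi_ses {E : ModuleCat.{u} R} (hE : IsGorensteinInjective E) :
    ∃ S : ShortComplex (ModuleCat.{u} R), S.ShortExact ∧ Nonempty (S.X₁ ≅ E) ∧
      Injective S.X₂ ∧ IsGorensteinInjective S.X₃ := by
  obtain ⟨C, hinj, hexact, ⟨e⟩, hlift⟩ := hE
  have hw0 : C.d 0 1 ≫ C.d 1 2 = 0 := C.d_comp_d 0 1 2
  have hzero : kernel.ι (C.d 0 1) ≫ kernel.lift (C.d 1 2) (C.d 0 1) hw0 = 0 := by
    rw [← cancel_mono (kernel.ι (C.d 1 2)), Category.assoc, kernel.lift_ι,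
      kernel.condition, zero_comp]
  refine ⟨ShortComplex.mk (kernel.ι (C.d 0 1)) (kernel.lift (C.d 1 2) (C.d 0 1) hw0) hzero,
    ?_, ⟨e.symm⟩, hinj 0, shifted_gi C hinj hexact hlift⟩
  have hx := hexact 1
  rw [HomologicalComplex.exactAt_iff' _ 0 1 2
    (by rw [CochainComplex.prev]; omega) (by rw [CochainComplex.next]; omega)] at hx
  have hepi : Epi (kernel.lift (C.d 1 2) (C.d 0 1) hw0) :=
    (ShortComplex.exact_iff_epi_kernel_lift _).1 hx
  have pf1 : 𝟙 (kernel (C.d 0 1)) ≫ kernel.ι (C.d 0 1) =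
      kernel.ι (C.d 0 1) ≫ 𝟙 (C.X 0) := by simp
  have pf2 : 𝟙 (C.X 0) ≫ C.d 0 1 =
      kernel.lift (C.d 1 2) (C.d 0 1) hw0 ≫ kernel.ι (C.d 1 2) := by
    rw [Category.id_comp, kernel.lift_ι]
  have hmid : (ShortComplex.mk (kernel.ι (C.d 0 1))
      (kernel.lift (C.d 1 2) (C.d 0 1) hw0) hzero).Exact := by
    rw [ShortComplex.exact_iff_of_epi_of_isIso_of_mono
      (S₁ := ShortComplex.mk (kernel.ι (C.d 0 1)) (kernel.lift (C.d 1 2) (C.d 0 1) hw0) hzero)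
      (S₂ := ShortComplex.mk (kernel.ι (C.d 0 1)) (C.d 0 1) (kernel.condition _))
      { τ₁ := 𝟙 _, τ₂ := 𝟙 _, τ₃ := kernel.ι (C.d 1 2), comm₁₂ := pf1, comm₂₃ := pf2 }]
    exact CategoryTheory.ShortComplex.exact_kernel (C.d 0 1)
  exact ⟨hmid⟩


/-- If `Ext¹(M, E) = 0` for every Gorenstein injective `E`, then
`Extⁱ(M, E) = 0` for all `i ≥ 1` and all Gorenstein injective `E`. -/
theorem stmt1 {R : Type u} [CommRing R] (M : ModuleCat.{u} R)
    (h : ∀ E : ModuleCat.{u} R, IsGorensteinInjective E → extVanish 1 M E) :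
    ∀ i : ℕ, 1 ≤ i → ∀ E : ModuleCat.{u} R, IsGorensteinInjective E → extVanish i M E := by
  intro i hi
  induction i, hi using Nat.le_induction with
  | base => exact h
  | succ n hn ih =>
    intro E hE
    obtain ⟨S, hS, ⟨e⟩, hI2, hGI3⟩ := gi_ses hE
    have P : ProjectiveResolution M := ProjectiveResolution.of M
    refine extVanish_congr' e ?_
    rw [extVanish_iff_isZero_homology' P]
    exact isZero_homology_step P S hS n
      ((extVanish_iff_isZero_homology' P n S.X₃).1 (ih S.X₃ hGI3))
      (isZero_homology_of_injective P S.X₂ hI2 n)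
end

section
/- Let R be a commutative ring. An R-module M is both Gorenstein projective and in GP^⊥ if and only if M is projective; that is, GP ∩ GP^⊥ equals the class of projective R-modules. -/
open CategoryTheory Opposite Limits MonoidalCategory

universe u

variable {R : Type u} [CommRing R]

namespace Stmt12Aux

lemma mcomp_apply {A B C' : ModuleCat.{u} R} (f : A ⟶ B) (g : B ⟶ C') (x : A) :
    (f ≫ g) x = g (f x) := rfl

lemma iso_invhom_apply {A B : ModuleCat.{u} R} (e : A ≅ B) (z : B) :
    e.hom (e.inv z) = z :=
  congrArg (fun φ : B ⟶ B => φ z) e.inv_hom_id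

lemma subsingleton_of_isZero {M : ModuleCat.{u} R} (h : IsZero M) : Subsingleton M := by
  refine ⟨fun a b => ?_⟩
  have h1 : (𝟙 M : M ⟶ M) = 0 := h.eq_of_src _ _
  have key : ∀ x : M, x = 0 := by
    intro x
    calc x = (𝟙 M : M ⟶ M) x := rfl
    _ = (0 : M ⟶ M) x := by rw [h1]
    _ = 0 := LinearMap.zero_apply x
  rw [key a, key b]

lemma subsingleton_of_iso {M N : ModuleCat.{u} R} (e : M ≅ N) (h : Subsingleton N) :
    Subsingleton M := Equiv.subsingleton ((forget _).mapIso e).toEquiv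

lemma ext_one_iff (W M : ModuleCat.{u} R) (P : ProjectiveResolution W) :
    Subsingleton (((Ext R (ModuleCat.{u} R) 1).obj (op W)).obj M) ↔
    ∀ f : P.complex.X 1 ⟶ M, P.complex.d 2 1 ≫ f = 0 →
      ∃ g : P.complex.X 0 ⟶ M, f = P.complex.d 1 0 ≫ g := by
  set D := P.complex.linearYonedaObj R M with hD
  have e := P.isoExt (R := R) 1 M
  have h1 : Subsingleton (((Ext R (ModuleCat.{u} R) 1).obj (op W)).obj M) ↔
      Subsingleton (D.homology 1) :=
    ⟨subsingleton_of_iso e.symm, subsingleton_of_iso e⟩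
  rw [h1]
  have h2 : Subsingleton (D.homology 1) ↔ D.ExactAt 1 := by
    rw [HomologicalComplex.exactAt_iff_isZero_homology]
    exact ⟨fun h => @ModuleCat.isZero_of_subsingleton _ _ _ h, subsingleton_of_isZero⟩
  rw [h2, D.exactAt_iff' 0 1 2 (by simp) (by simp)]
  rw [ShortComplex.moduleCat_exact_iff]
  dsimp only [HomologicalComplex.sc', HomologicalComplex.shortComplexFunctor']
  have hd : ∀ (i j : ℕ) (f' : P.complex.X i ⟶ M), D.d i j f' = P.complex.d j i ≫ f' := by
    intro i j f'
    show (P.complex.linearYonedaObj R M).d i j f' = _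
    simp [ChainComplex.linearYonedaObj_d]
    rfl
  constructor
  · intro h f hf
    obtain ⟨g, hg⟩ := h f ((hd 1 2 f).trans hf)
    replace hg := (hd 0 1 g).symm.trans hg
    exact ⟨g, hg.symm⟩
  · intro h f hf
    replace hf := (hd 1 2 f).symm.trans hf
    obtain ⟨g, hg⟩ := h f hf
    exact ⟨g, (hd 0 1 g).trans hg.symm⟩

lemma gp_of_projective (M : ModuleCat.{u} R) (hM : Projective M) :
    IsGorensteinProjective M := by
  classical
  set B : ModuleCat.{u} R := ModuleCat.of R (M × M) with hB
  set dm : B ⟶ B := ModuleCat.ofHom ((LinearMap.inl R M M).comp (LinearMap.snd R M M)) with hdm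
  set km : B ⟶ B := ModuleCat.ofHom ((LinearMap.inr R M M).comp (LinearMap.fst R M M)) with hkm
  have hdd : ∀ n : ℤ, dm ≫ dm = 0 := fun _ => by
    apply ModuleCat.hom_ext; apply LinearMap.ext; rintro ⟨a, b⟩; rfl
  set C : ChainComplex (ModuleCat.{u} R) ℤ :=
    ChainComplex.of (fun _ => B) (fun _ => dm) hdd with hC
  have hd : ∀ i j : ℤ, j + 1 = i → C.d i j = dm := by
    rintro i j rfl
    exact ChainComplex.of_d (fun _ => B) (fun _ => dm) j
  have hk : dm ≫ km + km ≫ dm = 𝟙 B := by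
    apply ModuleCat.hom_ext; apply LinearMap.ext; rintro ⟨a, b⟩
    show ((km (dm (a, b))) + dm (km (a, b))) = (a, b)
    show ((0 : M), b) + (a, (0 : M)) = (a, b)
    ext <;> simp
  have hproj : Projective B :=
    Projective.of_iso (ModuleCat.biprodIsoProd M M) inferInstance
  refine ⟨C, fun i => hproj, ?_, ?_, ?_⟩
  · intro i
    rw [C.exactAt_iff' (i + 1) i (i - 1) (by simp) (by simp)]
    dsimp only [HomologicalComplex.sc', HomologicalComplex.shortComplexFunctor']
    rw [ShortComplex.moduleCat_exact_iff]
    intro x hx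
    replace hx : C.d i (i-1) x = 0 := hx
    rw [hd i (i-1) (by omega)] at hx
    show ∃ x₁, C.d (i+1) i x₁ = x
    rw [hd (i+1) i rfl]
    obtain ⟨a, b⟩ := (x : (↑M × ↑M : Type u))
    have hb : ((b, (0:M)) : (↑M × ↑M : Type u)) = ((0:M), (0:M)) := hx
    have hb0 : b = 0 := congrArg Prod.fst hb
    exact ⟨((0 : M), a), by rw [hb0]; rfl⟩
  · refine ⟨?_ ≪≫ (cokernelIsoOfEq (hd 1 0 rfl)).symm⟩
    -- M ≅ cokernel dm
    refine ⟨ModuleCat.ofHom (LinearMap.inr R M M) ≫ cokernel.π dm,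
      cokernel.desc dm (ModuleCat.ofHom (LinearMap.snd R M M)) (by apply ModuleCat.hom_ext; apply LinearMap.ext; rintro ⟨a,b⟩; rfl),
      ?_, ?_⟩
    · rw [Category.assoc, cokernel.π_desc]
      apply ModuleCat.hom_ext; apply LinearMap.ext; intro m; rfl
    · rw [← cancel_epi (cokernel.π dm)]
      rw [cokernel.π_desc_assoc, Category.comp_id]
      have h1 : (ModuleCat.ofHom (LinearMap.snd R M M) ≫ ModuleCat.ofHom (LinearMap.inr R M M)) =
          dm ≫ km := by
        apply ModuleCat.hom_ext; apply LinearMap.ext; rintro ⟨a, b⟩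
        show ((0 : M), b) = km (b, (0:M))
        rfl
      rw [← Category.assoc, h1]
      have h2 : dm ≫ km = 𝟙 B - km ≫ dm := by rw [← hk]; abel
      rw [h2, Preadditive.sub_comp, Category.id_comp, Category.assoc, cokernel.condition,
        comp_zero, sub_zero]
  · intro P hP i f hf
    rw [hd (i+1) i rfl] at hf
    refine ⟨km ≫ f, ?_⟩
    have h3 : (dm ≫ km + km ≫ dm) ≫ f = f := by rw [hk]; exact Category.id_comp f
    rw [Preadditive.add_comp, Category.assoc, Category.assoc, hf, comp_zero, add_zero] at h3
    rw [hd i (i-1) (by omega)]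
    exact h3.symm

noncomputable def resComplex (C : ChainComplex (ModuleCat.{u} R) ℤ) :
    ChainComplex (ModuleCat.{u} R) ℕ :=
  ChainComplex.of (fun n : ℕ => C.X n) (fun n => C.d (n+1 : ℕ) n)
    (fun n => C.d_comp_d _ _ _)

lemma resComplex_d (C : ChainComplex (ModuleCat.{u} R) ℤ) (n : ℕ) :
    (resComplex C).d (n+1) n = C.d (n+1 : ℕ) n :=
  ChainComplex.of_d (fun n : ℕ => C.X n) (fun n => C.d (n+1 : ℕ) n) n

lemma resComplex_exactAt (C : ChainComplex (ModuleCat.{u} R) ℤ)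
    (h2 : ∀ i, C.ExactAt i) (n : ℕ) : (resComplex C).ExactAt (n+1) := by
  rw [HomologicalComplex.exactAt_iff' _ (n+2) (n+1) n (by simp) (by simp)]
  have hC := h2 (n+1 : ℕ)
  rw [HomologicalComplex.exactAt_iff' _ ((n+2 : ℕ) : ℤ) ((n+1 : ℕ) : ℤ) (n : ℤ)
    ((ComplexShape.down ℤ).prev_eq' (by rw [ComplexShape.down_Rel]; push_cast; ring))
    ((ComplexShape.down ℤ).next_eq' (by rw [ComplexShape.down_Rel]; push_cast; ring))] at hC
  refine ShortComplex.exact_of_iso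
    (ShortComplex.isoMk (S₁ := C.sc' ((n+2 : ℕ) : ℤ) ((n+1 : ℕ) : ℤ) (n : ℤ))
      (S₂ := (resComplex C).sc' (n+2) (n+1) n)
      (Iso.refl _) (Iso.refl _) (Iso.refl _) ?_ ?_) hC
  · dsimp [HomologicalComplex.sc', HomologicalComplex.shortComplexFunctor']
    erw [Category.id_comp, Category.comp_id]
    exact resComplex_d C (n+1)
  · dsimp [HomologicalComplex.sc', HomologicalComplex.shortComplexFunctor']
    erw [Category.id_comp, Category.comp_id]
    exact resComplex_d C n

noncomputable def resolutionOfComplex (C : ChainComplex (ModuleCat.{u} R) ℤ)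
    (h1 : ∀ i, Projective (C.X i)) (h2 : ∀ i, C.ExactAt i)
    (Q : ModuleCat.{u} R) (e : Q ≅ cokernel (C.d 1 0)) :
    ProjectiveResolution Q := by
  have hp : (resComplex C).d 1 0 ≫ (cokernel.π (C.d 1 0) ≫ e.inv) = 0 := by
    have h10 : (resComplex C).d 1 0 = C.d 1 0 := resComplex_d C 0
    rw [h10]; exact (by rw [← Category.assoc, cokernel.condition, Limits.zero_comp] : C.d 1 0 ≫ cokernel.π (C.d 1 0) ≫ e.inv = 0)
  refine
  { complex := resComplex C
    projective := fun n => h1 _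
    π := (ChainComplex.toSingle₀Equiv _ Q).symm ⟨cokernel.π (C.d 1 0) ≫ e.inv, hp⟩
    quasiIso := ⟨fun n => ?_⟩ }
  cases n with
  | zero =>
    rw [ChainComplex.quasiIsoAt₀_iff, ShortComplex.quasiIso_iff_of_zeros']
    rotate_left
    · rfl
    · rfl
    · rfl
    have hπ0 : ((ChainComplex.toSingle₀Equiv (resComplex C) Q).symm
        ⟨cokernel.π (C.d 1 0) ≫ e.inv, hp⟩).f 0 = cokernel.π (C.d 1 0) ≫ e.inv :=
      ChainComplex.toSingle₀Equiv_symm_apply_f_zero _ _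
    constructor
    · refine ShortComplex.exact_of_iso
        (ShortComplex.isoMk (S₁ := ShortComplex.mk (C.d 1 0) (cokernel.π (C.d 1 0))
          (cokernel.condition _)) (Iso.refl _) (Iso.refl _) e.symm ?_ ?_)
        (ShortComplex.exact_of_g_is_cokernel _ (cokernelIsCokernel _))
      · dsimp
        exact ((Category.id_comp _).trans (resComplex_d C 0)).trans (Category.comp_id _).symm
      · dsimp
        exact (Category.id_comp _).trans hπ0
    · show Epi (((ChainComplex.toSingle₀Equiv (resComplex C) Q).symm
        ⟨cokernel.π (C.d 1 0) ≫ e.inv, hp⟩).f 0)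
      rw [hπ0]
      exact epi_comp (cokernel.π (C.d 1 0)) e.inv
  | succ n =>
    rw [quasiIsoAt_iff_exactAt']
    · exact resComplex_exactAt C h2 n
    · apply ChainComplex.exactAt_succ_single_obj

lemma gp_shift (C : ChainComplex (ModuleCat.{u} R) ℤ)
    (h1 : ∀ i, Projective (C.X i)) (h2 : ∀ i, C.ExactAt i)
    (h4 : ∀ P : ModuleCat.{u} R, Projective P →
      ∀ (i : ℤ) (f : C.X i ⟶ P), C.d (i + 1) i ≫ f = 0 →
        ∃ g : C.X (i - 1) ⟶ P, f = C.d i (i - 1) ≫ g) :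
    IsGorensteinProjective (cokernel (C.d 0 (-1))) := by
  classical
  set C' : ChainComplex (ModuleCat.{u} R) ℤ :=
    ChainComplex.of (fun i => C.X (i-1)) (fun i => C.d (i+1-1) (i-1))
      (fun i => C.d_comp_d _ _ _) with hC'
  have hd' : ∀ i j : ℤ, j + 1 = i → C'.d i j = C.d (i-1) (j-1) := by
    rintro i j rfl
    exact ChainComplex.of_d (fun i => C.X (i-1)) (fun i => C.d (i+1-1) (i-1)) j
  refine ⟨C', fun i => h1 _, ?_, ?_, ?_⟩
  · intro i
    rw [C'.exactAt_iff' (i+1) i (i-1) (by simp) (by simp)]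
    have hC := h2 (i-1)
    rw [C.exactAt_iff' (i+1-1) (i-1) (i-1-1)
      ((ComplexShape.down ℤ).prev_eq' (by rw [ComplexShape.down_Rel]; omega))
      ((ComplexShape.down ℤ).next_eq' (by rw [ComplexShape.down_Rel]; omega))] at hC
    refine ShortComplex.exact_of_iso
      (ShortComplex.isoMk (S₁ := C.sc' (i+1-1) (i-1) (i-1-1)) (S₂ := C'.sc' (i+1) i (i-1))
        (Iso.refl _) (Iso.refl _) (Iso.refl _) ?_ ?_) hC
    · dsimp [HomologicalComplex.sc', HomologicalComplex.shortComplexFunctor']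
      rw [Category.id_comp, Category.comp_id]
      exact hd' (i+1) i rfl
    · dsimp [HomologicalComplex.sc', HomologicalComplex.shortComplexFunctor']
      rw [Category.id_comp, Category.comp_id]
      exact hd' i (i-1) (by omega)
  · have h10 : C'.d 1 0 = C.d 0 (-1) := hd' 1 0 rfl
    exact ⟨(cokernelIsoOfEq h10).symm⟩
  · intro P hP i f hf
    rw [hd' (i+1) i rfl] at hf
    have heq : i - 1 + 1 = i + 1 - 1 := by omega
    have hf' : C.d ((i-1) + 1) (i-1) ≫ f = 0 := by rw [heq]; exact hf
    obtain ⟨g, hg⟩ := h4 P hP (i-1) f hf'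
    exact ⟨g, by rw [hd' i (i-1) (by omega)]; exact hg⟩


lemma gpperp_of_projective (M : ModuleCat.{u} R) (hM : Projective M) :
    MemGPperp M := by
  rintro Q ⟨C, hp1, hp2, ⟨e⟩, hp4⟩
  set P := resolutionOfComplex C hp1 hp2 Q e with hP
  show Subsingleton (((Ext R (ModuleCat.{u} R) 1).obj (op Q)).obj M)
  rw [ext_one_iff Q M P]
  intro f hf
  have h21 : P.complex.d 2 1 = C.d 2 1 := resComplex_d C 1
  rw [h21] at hf
  have hf' : C.d (1 + 1) 1 ≫ f = 0 := hf
  obtain ⟨g, hg⟩ := hp4 M hM 1 f hf'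
  refine ⟨g, ?_⟩
  have h10 : P.complex.d 1 0 = C.d 1 0 := resComplex_d C 0
  rw [h10]
  exact hg

lemma projective_of_gp_perp (M : ModuleCat.{u} R)
    (hgp : IsGorensteinProjective M) (hperp : MemGPperp M) : Projective M := by
  obtain ⟨C, h1, h2, ⟨e⟩, h4⟩ := hgp
  -- the short exact sequence 0 → M → C.X (-1) → M₁ → 0
  set M₁ : ModuleCat.{u} R := cokernel (C.d 0 (-1)) with hM₁
  have hM₁gp : IsGorensteinProjective M₁ := gp_shift C h1 h2 h4
  set δ : cokernel (C.d 1 0) ⟶ C.X (-1) :=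
    cokernel.desc (C.d 1 0) (C.d 0 (-1)) (C.d_comp_d _ _ _) with hδ
  set ι : M ⟶ C.X (-1) := e.hom ≫ δ with hι
  set π' : C.X (-1) ⟶ M₁ := cokernel.π (C.d 0 (-1)) with hπ'
  -- exactness of C at 0, in concrete form
  have hT : ∀ y : C.X 0, C.d 0 (-1) y = 0 → ∃ z, C.d 1 0 z = y := by
    have hT := h2 0
    rw [C.exactAt_iff' 1 0 (-1)
      ((ComplexShape.down ℤ).prev_eq' (by rw [ComplexShape.down_Rel]; omega))
      ((ComplexShape.down ℤ).next_eq' (by rw [ComplexShape.down_Rel]; omega))] at hT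
    rw [ShortComplex.moduleCat_exact_iff] at hT
    exact hT
  have hδπ : δ ≫ π' = 0 := by
    rw [← cancel_epi (cokernel.π (C.d 1 0)), hδ, hπ', cokernel.π_desc_assoc,
      cokernel.condition, comp_zero]
  have hιπ : ι ≫ π' = 0 := by rw [hι, Category.assoc, hδπ, comp_zero]
  have hπδ : ∀ w : C.X 0, δ (cokernel.π (C.d 1 0) w) = C.d 0 (-1) w := fun w =>
    congrArg (fun φ : C.X 0 ⟶ C.X (-1) => φ w)
      (cokernel.π_desc (C.d 1 0) (C.d 0 (-1)) (C.d_comp_d _ _ _))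
  have hδmono : Mono δ := by
    rw [ModuleCat.mono_iff_injective]
    suffices h : ∀ z : ↑(cokernel (C.d 1 0)), δ z = 0 → z = 0 by
      intro x y hxy
      have h2' := h (x - y) (by rw [map_sub, hxy, sub_self])
      rwa [sub_eq_zero] at h2'
    intro z hz
    obtain ⟨w, hw⟩ := (ModuleCat.epi_iff_surjective (cokernel.π (C.d 1 0))).1
      inferInstance z
    have hdw : C.d 0 (-1) w = 0 := by rw [← hπδ w, hw, hz]
    obtain ⟨v, hv⟩ := hT w hdw
    have hz2 : z = cokernel.π (C.d 1 0) (C.d 1 0 v) := by rw [hv, hw]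
    rw [hz2]
    have : (C.d 1 0 ≫ cokernel.π (C.d 1 0)) v = 0 := by
      rw [cokernel.condition]
      exact LinearMap.zero_apply v
    exact this
  have hιmono : Mono ι := by
    rw [hι]
    exact mono_comp _ _
  -- exactness of 0 → M → C.X (-1) → M₁
  set S : ShortComplex (ModuleCat.{u} R) := ShortComplex.mk ι π' hιπ with hS
  have hSexact : S.Exact := by
    rw [ShortComplex.moduleCat_exact_iff]
    intro x hx
    have hx' : π' x = 0 := hx
    have hmk := ModuleCat.cokernel_π_cokernelIsoRangeQuotient_hom (C.d 0 (-1))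
    have h5 : (LinearMap.range (C.d 0 (-1)).hom).mkQ x =
        (ModuleCat.cokernelIsoRangeQuotient (C.d 0 (-1))).hom (π' x) :=
      (congrArg (fun φ : C.X (-1) ⟶ _ => φ x) hmk).symm
    rw [hx', map_zero] at h5
    have hrange : x ∈ LinearMap.range (C.d 0 (-1)).hom :=
      (Submodule.Quotient.mk_eq_zero _).1 h5
    obtain ⟨y, hy⟩ := hrange
    refine ⟨e.inv (cokernel.π (C.d 1 0) y), ?_⟩
    show ι (e.inv (cokernel.π (C.d 1 0) y)) = x
    have : ι (e.inv (cokernel.π (C.d 1 0) y)) =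
        δ (e.hom (e.inv (cokernel.π (C.d 1 0) y))) := rfl
    rw [this, iso_invhom_apply, hπδ, hy]
  haveI : Mono S.f := hιmono
  have hlift : ∀ {A : ModuleCat.{u} R} (kk : A ⟶ C.X (-1)), kk ≫ π' = 0 →
      ∃ l : A ⟶ M, l ≫ ι = kk := fun kk hkk =>
    ⟨hSexact.lift kk hkk, hSexact.lift_f kk hkk⟩
  -- projective resolution of M₁ and Ext vanishing
  set P := ProjectiveResolution.of M₁ with hPdef
  have hhom := (ext_one_iff M₁ M P).1 (hperp M₁ hM₁gp)
  -- construct a retraction of ι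
  set β : P.complex.X 0 ⟶ C.X (-1) := Projective.factorThru (X := M₁) (P.π.f 0) π' with hβ
  have hβπ : β ≫ π' = P.π.f 0 := Projective.factorThru_comp _ _
  have hdβ : (P.complex.d 1 0 ≫ β) ≫ π' = 0 := by
    rw [Category.assoc, hβπ]; exact P.complex_d_comp_π_f_zero
  obtain ⟨α, hα⟩ := hlift (P.complex.d 1 0 ≫ β) hdβ
  have hα2 : P.complex.d 2 1 ≫ α = 0 := by
    rw [← cancel_mono ι, Category.assoc, hα, zero_comp, ← Category.assoc,
      HomologicalComplex.d_comp_d, zero_comp]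
  obtain ⟨γ, hγ⟩ := hhom α hα2
  have hβ'd : P.complex.d 1 0 ≫ (β - γ ≫ ι) = 0 := by
    rw [Preadditive.comp_sub, ← Category.assoc, ← hγ, hα, sub_self]
  haveI : Epi (ShortComplex.mk (P.complex.d 1 0) (P.π.f 0)
    P.complex_d_comp_π_f_zero).g := by
    show Epi (P.π.f 0); infer_instance
  set s : M₁ ⟶ C.X (-1) := P.exact₀.desc (β - γ ≫ ι) hβ'd with hs
  have hπs : P.π.f 0 ≫ s = β - γ ≫ ι := P.exact₀.g_desc _ _
  have hsπ' : s ≫ π' = 𝟙 M₁ := by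
    refine (cancel_epi (P.π.f 0)).1 ((Category.assoc _ _ _).symm.trans ?_)
    rw [hπs, Preadditive.sub_comp,
      hβπ, Category.assoc, hιπ, comp_zero]
    exact (sub_zero _).trans (Category.comp_id _).symm
  have hrζ : (𝟙 (C.X (-1)) - π' ≫ s) ≫ π' = 0 := by
    rw [Preadditive.sub_comp, Category.id_comp, Category.assoc, hsπ',
      Category.comp_id, sub_self]
  obtain ⟨r, hr⟩ := hlift (𝟙 (C.X (-1)) - π' ≫ s) hrζ
  have hιr : ι ≫ r = 𝟙 M := by
    rw [← cancel_mono ι, Category.assoc, hr, Preadditive.comp_sub,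
      Category.comp_id, ← Category.assoc, hιπ, zero_comp, sub_zero,
      Category.id_comp]
  -- M is a retract of the projective module C.X (-1)
  refine ⟨fun {E X'} f' e' he' => ?_⟩
  haveI := h1 (-1)
  haveI : Epi e' := he'
  refine ⟨ι ≫ Projective.factorThru (r ≫ f') e', ?_⟩
  rw [Category.assoc, Projective.factorThru_comp, ← Category.assoc, hιr,
    Category.id_comp]

end Stmt12Aux


/-- `GP ∩ GP^⊥` is exactly the class of projective modules. -/
theorem stmt12 {R : Type u} [CommRing R] (M : ModuleCat.{u} R) :
    (IsGorensteinProjective M ∧ MemGPperp M) ↔ Projective M := by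
  constructor
  · rintro ⟨hgp, hperp⟩
    exact Stmt12Aux.projective_of_gp_perp M hgp hperp
  · intro h
    exact ⟨Stmt12Aux.gp_of_projective M h, Stmt12Aux.gpperp_of_projective M h⟩
end

section
/- Let R be a commutative Noetherian ring of finite Krull dimension. If every short exact sequence of R-modules is GP-pure exact exactly when it is GI-copure exact, then R is virtually Gorenstein, i.e. GP^⊥ = ^⊥GI. -/
open CategoryTheory Opposite Limits MonoidalCategory

universe u

variable {R : Type u} [CommRing R]

namespace Aux17

lemma eqToHom_d {C : Type*} [Category C] [Limits.HasZeroMorphisms C] {ι : Type*}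
    {c : ComplexShape ι} (K : HomologicalComplex C c) {i i' j : ι} (h : i' = i) :
    eqToHom (congrArg K.X h) ≫ K.d i j = K.d i' j := by cases h; simp

lemma d_eqToHom {C : Type*} [Category C] [Limits.HasZeroMorphisms C] {ι : Type*}
    {c : ComplexShape ι} (K : HomologicalComplex C c) {i j j' : ι} (h : j = j') :
    K.d i j ≫ eqToHom (congrArg K.X h) = K.d i j' := by cases h; simp

/-- shift of a `ℤ`-chain complex -/
@[simps]
def shiftChain (C : ChainComplex (ModuleCat.{u} R) ℤ) : ChainComplex (ModuleCat.{u} R) ℤ where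
  X i := C.X (i + 1)
  d i j := C.d (i + 1) (j + 1)
  shape i j h := C.shape _ _ (by simp only [ComplexShape.down_Rel] at h ⊢; omega)
  d_comp_d' i j k _ _ := C.d_comp_d _ _ _

@[simps]
def shiftCochain (C : CochainComplex (ModuleCat.{u} R) ℤ) : CochainComplex (ModuleCat.{u} R) ℤ where
  X i := C.X (i + 1)
  d i j := C.d (i + 1) (j + 1)
  shape i j h := C.shape _ _ (by simp only [ComplexShape.up_Rel] at h ⊢; omega)
  d_comp_d' i j k _ _ := C.d_comp_d _ _ _

lemma shiftChain_exactAt (C : ChainComplex (ModuleCat.{u} R) ℤ) (hex : ∀ i, C.ExactAt i) (i : ℤ) :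
    (shiftChain C).ExactAt i := by
  rw [HomologicalComplex.exactAt_iff' _ (i+1) i (i-1) (by simp) (by simp)]
  have := (HomologicalComplex.exactAt_iff' C (i+1+1) (i+1) i (by simp) (by simp)).1 (hex (i+1))
  dsimp [HomologicalComplex.sc', HomologicalComplex.shortComplexFunctor'] at this ⊢
  refine ShortComplex.exact_of_iso
    (S₁ := ShortComplex.mk (C.d (i+1+1) (i+1)) (C.d (i+1) i) (C.d_comp_d _ _ _))
    (ShortComplex.isoMk (Iso.refl _) (Iso.refl _)
      (eqToIso (congrArg C.X (show i = i - 1 + 1 by ring)))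
      (by exact (Category.id_comp _).trans (Category.comp_id _).symm) ?_) this
  exact (Category.id_comp _).trans (d_eqToHom C (show i = i - 1 + 1 by ring)).symm

lemma shiftCochain_exactAt (C : CochainComplex (ModuleCat.{u} R) ℤ) (hex : ∀ i, C.ExactAt i)
    (i : ℤ) : (shiftCochain C).ExactAt i := by
  rw [HomologicalComplex.exactAt_iff' _ (i-1) i (i+1) (by simp) (by simp)]
  have := (HomologicalComplex.exactAt_iff' C i (i+1) (i+1+1) (by simp) (by simp)).1 (hex (i+1))
  dsimp [HomologicalComplex.sc', HomologicalComplex.shortComplexFunctor'] at this ⊢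
  refine ShortComplex.exact_of_iso
    (S₁ := ShortComplex.mk (C.d i (i+1)) (C.d (i+1) (i+1+1)) (C.d_comp_d _ _ _))
    (ShortComplex.isoMk (eqToIso (congrArg C.X (show i = i - 1 + 1 by ring))) (Iso.refl _)
      (Iso.refl _) ?_ (by exact (Category.id_comp _).trans (Category.comp_id _).symm)) this
  exact (eqToHom_d C (show i = i - 1 + 1 by ring)).trans (Category.comp_id _).symm

end Aux17
namespace Aux17

lemma GP_syzygy (C : ChainComplex (ModuleCat.{u} R) ℤ)
    (hproj : ∀ i, Projective (C.X i)) (hex : ∀ i, C.ExactAt i)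
    (hlift : ∀ P : ModuleCat.{u} R, Projective P →
      ∀ (i : ℤ) (f : C.X i ⟶ P), C.d (i + 1) i ≫ f = 0 →
        ∃ g : C.X (i - 1) ⟶ P, f = C.d i (i - 1) ≫ g) :
    IsGorensteinProjective (cokernel (C.d 2 1)) := by
  refine ⟨shiftChain C, fun i => hproj (i + 1), shiftChain_exactAt C hex, ⟨Iso.refl _⟩, ?_⟩
  intro P hP i f hf
  obtain ⟨g, hg⟩ := hlift P hP (i + 1) f hf
  refine ⟨eqToHom (congrArg C.X (show i - 1 + 1 = i + 1 - 1 by ring)) ≫ g, ?_⟩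
  rw [hg]
  simp only [shiftChain_d]
  rw [← d_eqToHom C (show i - 1 + 1 = i + 1 - 1 by ring), Category.assoc]
  rfl

lemma GI_syzygy (D : CochainComplex (ModuleCat.{u} R) ℤ)
    (hinj : ∀ i, Injective (D.X i)) (hex : ∀ i, D.ExactAt i)
    (hlift : ∀ I : ModuleCat.{u} R, Injective I →
      ∀ (i : ℤ) (f : I ⟶ D.X i), f ≫ D.d i (i + 1) = 0 →
        ∃ g : I ⟶ D.X (i - 1), f = g ≫ D.d (i - 1) i) :
    IsGorensteinInjective (kernel (D.d 1 2)) := by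
  refine ⟨shiftCochain D, fun i => hinj (i + 1), shiftCochain_exactAt D hex, ⟨Iso.refl _⟩, ?_⟩
  intro I hI i f hf
  obtain ⟨g, hg⟩ := hlift I hI (i + 1) f hf
  refine ⟨g ≫ eqToHom (congrArg D.X (show i + 1 - 1 = i - 1 + 1 by ring)), ?_⟩
  rw [hg]
  simp only [shiftCochain_d]
  erw [Category.assoc, eqToHom_d D (show i + 1 - 1 = i - 1 + 1 by ring)]
  rfl

lemma GP_extend (C : ChainComplex (ModuleCat.{u} R) ℤ)
    (hlift : ∀ P : ModuleCat.{u} R, Projective P →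
      ∀ (i : ℤ) (f : C.X i ⟶ P), C.d (i + 1) i ≫ f = 0 →
        ∃ g : C.X (i - 1) ⟶ P, f = C.d i (i - 1) ≫ g)
    (P : ModuleCat.{u} R) (hP : Projective P) (u : cokernel (C.d 2 1) ⟶ P) :
    ∃ g : C.X 0 ⟶ P, cokernel.desc (C.d 2 1) (C.d 1 0) (C.d_comp_d 2 1 0) ≫ g = u := by
  have hf : C.d (1 + 1) 1 ≫ (cokernel.π (C.d 2 1) ≫ u) = 0 := by
    show C.d 2 1 ≫ cokernel.π (C.d 2 1) ≫ u = 0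
    rw [cokernel.condition_assoc, zero_comp]
  obtain ⟨g, hg⟩ := hlift P hP 1 (cokernel.π (C.d 2 1) ≫ u) hf
  refine ⟨g, ?_⟩
  have : cokernel.π (C.d 2 1) ≫ cokernel.desc (C.d 2 1) (C.d 1 0) (C.d_comp_d 2 1 0) ≫ g
      = cokernel.π (C.d 2 1) ≫ u := by
    rw [cokernel.π_desc_assoc]
    exact hg.symm
  rw [← cancel_epi (cokernel.π (C.d 2 1)), ← Category.assoc]
  rw [← Category.assoc] at this
  exact this

lemma GI_lift (D : CochainComplex (ModuleCat.{u} R) ℤ)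
    (hlift : ∀ I : ModuleCat.{u} R, Injective I →
      ∀ (i : ℤ) (f : I ⟶ D.X i), f ≫ D.d i (i + 1) = 0 →
        ∃ g : I ⟶ D.X (i - 1), f = g ≫ D.d (i - 1) i)
    (I : ModuleCat.{u} R) (hI : Injective I) (f : I ⟶ D.X 1) (hf : f ≫ D.d 1 2 = 0) :
    ∃ g : I ⟶ D.X 0, f = g ≫ D.d 0 1 := by
  obtain ⟨g, hg⟩ := hlift I hI 1 f (show f ≫ D.d 1 (1 + 1) = 0 from hf)
  exact ⟨g, hg⟩

/-- Truncation of a `ℤ`-indexed chain complex to a `ℕ`-indexed one. -/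
@[simps]
def trunc (C : ChainComplex (ModuleCat.{u} R) ℤ) : ChainComplex (ModuleCat.{u} R) ℕ where
  X n := C.X n
  d i j := C.d i j
  shape i j hij := C.shape _ _ (by
    simp only [ComplexShape.down_Rel] at hij ⊢
    intro hh
    exact hij (by exact_mod_cast hh))
  d_comp_d' i j k _ _ := C.d_comp_d _ _ _

lemma trunc_exactAt_succ (C : ChainComplex (ModuleCat.{u} R) ℤ) (hex : ∀ i, C.ExactAt i)
    (n : ℕ) : (trunc C).ExactAt (n + 1) := by
  rw [HomologicalComplex.exactAt_iff' _ (n + 2) (n + 1) n (by simp) (by simp)]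
  exact (HomologicalComplex.exactAt_iff' C ((n : ℤ) + 1 + 1) ((n : ℤ) + 1) n
    (by simp) (by simp)).1 (hex ((n : ℤ) + 1))

/-- The projective resolution of a Gorenstein projective module obtained by
truncating its totally acyclic complex. -/
noncomputable def gpRes (C : ChainComplex (ModuleCat.{u} R) ℤ)
    (hproj : ∀ i, Projective (C.X i)) (hex : ∀ i, C.ExactAt i)
    (Q : ModuleCat.{u} R) (e : Q ≅ cokernel (C.d 1 0)) : ProjectiveResolution Q where
  complex := trunc C
  projective n := hproj n
  π := (ChainComplex.toSingle₀Equiv _ _).symm ⟨cokernel.π (C.d 1 0) ≫ e.inv, by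
    show C.d 1 0 ≫ cokernel.π (C.d 1 0) ≫ e.inv = 0
    rw [cokernel.condition_assoc, zero_comp]⟩
  quasiIso := ⟨fun n => by
    cases n with
    | zero =>
      rw [ChainComplex.quasiIsoAt₀_iff, ShortComplex.quasiIso_iff_of_zeros']
      rotate_left
      · exact (trunc C).shape 0 0 (by simp)
      · rfl
      · rfl
      · refine (ShortComplex.exact_and_epi_g_iff_of_iso
          (S₂ := ShortComplex.mk (C.d 1 0) (cokernel.π (C.d 1 0) ≫ e.inv)
            (by rw [cokernel.condition_assoc, zero_comp])) ?_).2 ⟨?_, ?_⟩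
        · refine ShortComplex.isoMk (Iso.refl _) (Iso.refl _) (Iso.refl _)
            (by exact (Category.id_comp _).trans (Category.comp_id _).symm) ?_
          · dsimp
            refine (Category.id_comp _).trans ?_
            exact (ChainComplex.toSingle₀Equiv_symm_apply_f_zero
              (C := trunc C) (X := Q) (f := cokernel.π (C.d 1 0) ≫ e.inv) (hf := by
                show C.d 1 0 ≫ cokernel.π (C.d 1 0) ≫ e.inv = 0
                rw [cokernel.condition_assoc, zero_comp])).symm
        · refine ShortComplex.exact_of_iso
            (S₁ := ShortComplex.mk (C.d 1 0) (cokernel.π (C.d 1 0)) (cokernel.condition _))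
            (ShortComplex.isoMk (Iso.refl _) (Iso.refl _) e.symm (by simp) (by simp))
            (ShortComplex.exact_of_g_is_cokernel _ (cokernelIsCokernel _))
        · exact epi_comp _ _
    | succ n =>
      rw [quasiIsoAt_iff_exactAt']
      · exact trunc_exactAt_succ C hex n
      · apply ChainComplex.exactAt_succ_single_obj⟩

lemma isZero_iff_subsingleton (M : ModuleCat.{u} R) : IsZero M ↔ Subsingleton M := by
  constructor
  · intro h
    refine ⟨fun a b => ?_⟩
    have h0 : (𝟙 M : M ⟶ M) = 0 := h.eq_of_src _ _
    have ha : a = (0 : M ⟶ M) a := by rw [← h0]; rfl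
    have hb : b = (0 : M ⟶ M) b := by rw [← h0]; rfl
    rw [ha, hb]; rfl
  · intro h
    exact ModuleCat.isZero_of_subsingleton M

lemma extVanish_iff (X Y : ModuleCat.{u} R) (P : ProjectiveResolution X) :
    extVanish 1 X Y ↔
      ∀ f : P.complex.X 1 ⟶ Y, P.complex.d 2 1 ≫ f = 0 →
        ∃ g : P.complex.X 0 ⟶ Y, f = P.complex.d 1 0 ≫ g := by
  have e := P.isoExt (R := R) 1 Y
  have h1 : extVanish 1 X Y ↔ IsZero ((P.complex.linearYonedaObj R Y).homology 1) := by
    constructor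
    · intro h
      rw [isZero_iff_subsingleton]
      exact (e.symm.toLinearEquiv.toEquiv).subsingleton
    · intro h
      haveI := (isZero_iff_subsingleton _).1 h
      exact (e.toLinearEquiv.toEquiv).subsingleton
  rw [h1, ← HomologicalComplex.exactAt_iff_isZero_homology,
    HomologicalComplex.exactAt_iff' _ 0 1 2 (by simp) (by simp)]
  rw [ShortComplex.moduleCat_exact_iff]
  simp only [HomologicalComplex.sc', HomologicalComplex.shortComplexFunctor',
    ChainComplex.linearYonedaObj_X, ChainComplex.linearYonedaObj_d]
  constructor
  · intro H f hf
    obtain ⟨g, hg⟩ := H f hf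
    exact ⟨g, hg.symm⟩
  · intro H f hf
    obtain ⟨g, hg⟩ := H f hf
    exact ⟨g, hg.symm⟩

section MRes

variable (M : ModuleCat.{u} R) (P : ProjectiveResolution M)

/-- first syzygy of the resolution, presented as a cokernel -/
noncomputable abbrev KK : ModuleCat.{u} R := cokernel (P.complex.d 2 1)

noncomputable def iotaK : KK M P ⟶ P.complex.X 0 :=
  cokernel.desc _ (P.complex.d 1 0) (P.complex.d_comp_d 2 1 0)

noncomputable def piM : P.complex.X 0 ⟶ M := P.π.f 0

lemma epi_piM : Epi (piM M P) := inferInstanceAs (Epi (P.π.f 0))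

lemma d_comp_piM : P.complex.d 1 0 ≫ piM M P = 0 := P.complex_d_comp_π_f_zero

lemma exact_d_piM : (ShortComplex.mk (P.complex.d 1 0) (piM M P) (d_comp_piM M P)).Exact :=
  P.exact₀

lemma pi_iotaK : cokernel.π (P.complex.d 2 1) ≫ iotaK M P = P.complex.d 1 0 :=
  cokernel.π_desc _ _ _

lemma mono_iotaK : Mono (iotaK M P) := by
  rw [ModuleCat.mono_iff_injective]
  have hex := (ShortComplex.moduleCat_exact_iff _).1 (P.exact_succ 0)
  have hπι : ∀ z, iotaK M P (cokernel.π (P.complex.d 2 1) z) = P.complex.d 1 0 z := by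
    intro z
    change (cokernel.π (P.complex.d 2 1) ≫ iotaK M P) z = _
    rw [pi_iotaK]
  intro a b hab
  obtain ⟨x, rfl⟩ := (ModuleCat.epi_iff_surjective (cokernel.π (P.complex.d 2 1))).1
    inferInstance a
  obtain ⟨y, rfl⟩ := (ModuleCat.epi_iff_surjective (cokernel.π (P.complex.d 2 1))).1
    inferInstance b
  rw [hπι, hπι] at hab
  have h2 : P.complex.d 1 0 (x - y) = 0 := by rw [map_sub, hab, sub_self]
  obtain ⟨z, hz⟩ := hex (x - y) h2
  rw [← sub_eq_zero, ← map_sub, ← hz]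
  change (P.complex.d 2 1 ≫ cokernel.π (P.complex.d 2 1)) z = 0
  rw [cokernel.condition]
  rfl

lemma iotaK_comp_piM : iotaK M P ≫ piM M P = 0 := by
  rw [← cancel_epi (cokernel.π (P.complex.d 2 1)), ← Category.assoc, pi_iotaK, d_comp_piM,
    comp_zero]

/-- the short exact sequence `0 → K → P₀ → M → 0` -/
noncomputable def SP : ShortComplex (ModuleCat.{u} R) :=
  ShortComplex.mk (iotaK M P) (piM M P) (iotaK_comp_piM M P)

lemma SP_shortExact : (SP M P).ShortExact := by
  have ex : (SP M P).Exact := ?_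
  · exact { exact := ex, mono_f := mono_iotaK M P, epi_g := epi_piM M P }
  rw [ShortComplex.moduleCat_exact_iff]
  intro x hx
  obtain ⟨y, hy⟩ := (ShortComplex.moduleCat_exact_iff _).1 (exact_d_piM M P) x hx
  refine ⟨cokernel.π (P.complex.d 2 1) y, ?_⟩
  change (cokernel.π (P.complex.d 2 1) ≫ iotaK M P) y = x
  rw [pi_iotaK]
  exact hy

lemma charPerp (Y : ModuleCat.{u} R) :
    extVanish 1 M Y ↔ ∀ u : KK M P ⟶ Y, ∃ g : P.complex.X 0 ⟶ Y, iotaK M P ≫ g = u := by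
  rw [extVanish_iff M Y P]
  constructor
  · intro H u
    obtain ⟨g, hg⟩ := H (cokernel.π (P.complex.d 2 1) ≫ u)
      (by rw [cokernel.condition_assoc, zero_comp])
    refine ⟨g, ?_⟩
    rw [← cancel_epi (cokernel.π (P.complex.d 2 1)), ← Category.assoc, pi_iotaK]
    exact hg.symm
  · intro H f hf
    obtain ⟨g, hg⟩ := H (cokernel.desc _ f hf)
    refine ⟨g, ?_⟩
    rw [← cokernel.π_desc (P.complex.d 2 1) f hf, ← hg, ← Category.assoc, pi_iotaK]

end MRes

end Aux17

/-- Over a Noetherian ring of finite Krull dimension, if `GP`-pure exactness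
and `GI`-copure exactness of short exact sequences coincide, then `R` is virtually
Gorenstein. -/
theorem stmt17 {R : Type u} [CommRing R] (hNoeth : IsNoetherianRing R)
    (hdim : ringKrullDim R < ⊤)
    (h : ∀ S : ShortComplex (ModuleCat.{u} R), S.ShortExact →
      (GPPureExact S ↔ GICopureExact S)) :
    ∀ M : ModuleCat.{u} R, MemGPperp M ↔ MemPerpGI M := by
  intro M
  let P : ProjectiveResolution M := ProjectiveResolution.of M
  have hS' := Aux17.SP_shortExact M P
  let J : ModuleCat.{u} R := Injective.under M
  let j : M ⟶ J := Injective.ι M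
  let S : ShortComplex (ModuleCat.{u} R) :=
    ShortComplex.mk j (cokernel.π j) (cokernel.condition j)
  have hS : S.ShortExact :=
    { exact := ShortComplex.exact_of_g_is_cokernel _ (cokernelIsCokernel j) }
  constructor
  · -- MemGPperp M → MemPerpGI M
    intro hM E hE
    obtain ⟨D, hinjD, hexD, ⟨eE⟩, hliftD⟩ := hE
    rw [Aux17.charPerp M P E]
    intro u
    have step1 : GPPureExact S := by
      intro U hU φ
      let PQ : ProjectiveResolution U := ProjectiveResolution.of U
      let πQ : PQ.complex.X 0 ⟶ U := PQ.π.f 0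
      haveI hπQe : Epi πQ := inferInstanceAs (Epi (PQ.π.f 0))
      let φ₀ : PQ.complex.X 0 ⟶ cokernel j := πQ ≫ φ
      let ψ₀ : PQ.complex.X 0 ⟶ J := Projective.factorThru φ₀ (cokernel.π j)
      have hψ₀ : ψ₀ ≫ cokernel.π j = φ₀ := Projective.factorThru_comp _ _
      have hd0πQ : PQ.complex.d 1 0 ≫ πQ = 0 := PQ.complex_d_comp_π_f_zero
      have hτ0 : (PQ.complex.d 1 0 ≫ ψ₀) ≫ cokernel.π j = 0 := by
        rw [Category.assoc, hψ₀]
        show PQ.complex.d 1 0 ≫ πQ ≫ φ = 0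
        rw [← Category.assoc, hd0πQ, zero_comp]
      haveI := hS.mono_f
      let τ : PQ.complex.X 1 ⟶ M := hS.exact.lift (PQ.complex.d 1 0 ≫ ψ₀) hτ0
      have hτ : τ ≫ j = PQ.complex.d 1 0 ≫ ψ₀ := hS.exact.lift_f _ _
      have hτc : PQ.complex.d 2 1 ≫ τ = 0 := by
        have : Mono j := inferInstanceAs (Mono S.f)
        rw [← cancel_mono j, Category.assoc, hτ, ← Category.assoc,
          HomologicalComplex.d_comp_d, zero_comp, zero_comp]
      obtain ⟨σ, hσ⟩ := (Aux17.extVanish_iff U M PQ).1 (hM U hU) τ hτc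
      have hd : PQ.complex.d 1 0 ≫ (ψ₀ - σ ≫ j) = 0 := by
        rw [Preadditive.comp_sub, ← Category.assoc, ← hσ, hτ, sub_self]
      let ψ : U ⟶ J := PQ.exact₀.desc (ψ₀ - σ ≫ j) hd
      have hψd : πQ ≫ ψ = ψ₀ - σ ≫ j := PQ.exact₀.g_desc _ _
      refine ⟨ψ, ?_⟩
      rw [← cancel_epi πQ]
      show πQ ≫ ψ ≫ cokernel.π j = πQ ≫ φ
      rw [← Category.assoc, hψd, Preadditive.sub_comp, hψ₀, Category.assoc,
        cokernel.condition, comp_zero, sub_zero]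
    have step2 : GICopureExact S := (h S hS).1 step1
    haveI hmι := Aux17.mono_iotaK M P
    haveI := hinjD 0
    let u' : Aux17.KK M P ⟶ kernel (D.d 0 1) := u ≫ eE.hom
    let w : P.complex.X 0 ⟶ D.X 0 :=
      Injective.factorThru (u' ≫ kernel.ι (D.d 0 1)) (Aux17.iotaK M P)
    have hw : Aux17.iotaK M P ≫ w = u' ≫ kernel.ι (D.d 0 1) := Injective.comp_factorThru _ _
    have hw0 : (Aux17.SP M P).f ≫ (w ≫ D.d 0 1) = 0 := by
      show Aux17.iotaK M P ≫ w ≫ D.d 0 1 = 0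
      rw [← Category.assoc, hw, Category.assoc, kernel.condition, comp_zero]
    haveI := hS'.epi_g
    let v : M ⟶ D.X 1 := hS'.exact.desc (w ≫ D.d 0 1) hw0
    have hv : Aux17.piM M P ≫ v = w ≫ D.d 0 1 := hS'.exact.g_desc _ _
    have hv2 : v ≫ D.d 1 2 = 0 := by
      haveI := Aux17.epi_piM M P
      rw [← cancel_epi (Aux17.piM M P), ← Category.assoc, hv, Category.assoc,
        HomologicalComplex.d_comp_d, comp_zero, comp_zero]
    let v' : M ⟶ kernel (D.d 1 2) := kernel.lift (D.d 1 2) v hv2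
    have hE1 := Aux17.GI_syzygy D hinjD hexD hliftD
    obtain ⟨ψ, hψ⟩ := step2 (kernel (D.d 1 2)) hE1 v'
    have hψ' : j ≫ ψ = v' := hψ
    obtain ⟨g₁, hg₁⟩ := Aux17.GI_lift D hliftD J inferInstance (ψ ≫ kernel.ι (D.d 1 2))
      (by rw [Category.assoc, kernel.condition, comp_zero])
    have hc : (w - Aux17.piM M P ≫ j ≫ g₁) ≫ D.d 0 1 = 0 := by
      rw [Preadditive.sub_comp]
      have e2 : (Aux17.piM M P ≫ j ≫ g₁) ≫ D.d 0 1 = Aux17.piM M P ≫ v := by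
        rw [Category.assoc, Category.assoc, ← hg₁, ← Category.assoc j, hψ',
          kernel.lift_ι]
      rw [e2, hv, sub_self]
    let g' := kernel.lift (D.d 0 1) (w - Aux17.piM M P ≫ j ≫ g₁) hc
    refine ⟨g' ≫ eE.inv, ?_⟩
    have hg' : Aux17.iotaK M P ≫ g' = u' := by
      rw [← cancel_mono (kernel.ι (D.d 0 1)), Category.assoc, kernel.lift_ι,
        Preadditive.comp_sub, hw, ← Category.assoc, Aux17.iotaK_comp_piM, zero_comp, sub_zero]
    rw [← Category.assoc, hg']
    show (u ≫ eE.hom) ≫ eE.inv = u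
    rw [Category.assoc, eE.hom_inv_id, Category.comp_id]
  · -- MemPerpGI M → MemGPperp M
    intro hM Q hQ
    obtain ⟨C, hprojC, hexC, ⟨eQ⟩, hliftC⟩ := hQ
    have step1 : GICopureExact (Aux17.SP M P) := by
      intro V hV φ
      exact ((Aux17.charPerp M P V).1 (hM V hV)) φ
    have step2 : GPPureExact (Aux17.SP M P) := (h _ hS').2 step1
    rw [Aux17.extVanish_iff _ M (Aux17.gpRes C hprojC hexC _ eQ)]
    intro f hf
    have hf' : C.d 2 1 ≫ f = 0 := hf
    have hQ1 := Aux17.GP_syzygy C hprojC hexC hliftC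
    obtain ⟨uhat, huhat⟩ := step2 (cokernel (C.d 2 1)) hQ1 (cokernel.desc (C.d 2 1) f hf')
    obtain ⟨g₀, hg₀⟩ := Aux17.GP_extend C hliftC (P.complex.X 0) (P.projective 0) uhat
    refine ⟨g₀ ≫ Aux17.piM M P, ?_⟩
    show f = C.d 1 0 ≫ g₀ ≫ Aux17.piM M P
    have huhat' : uhat ≫ Aux17.piM M P = cokernel.desc (C.d 2 1) f hf' := huhat
    calc (show C.X 1 ⟶ M from f) = cokernel.π (C.d 2 1) ≫ cokernel.desc (C.d 2 1) f hf' :=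
          (cokernel.π_desc _ _ _).symm
    _ = cokernel.π (C.d 2 1) ≫ uhat ≫ Aux17.piM M P := by rw [huhat']
    _ = cokernel.π (C.d 2 1) ≫ (cokernel.desc (C.d 2 1) (C.d 1 0) (C.d_comp_d 2 1 0) ≫ g₀) ≫
          Aux17.piM M P := by rw [hg₀]; rfl
    _ = C.d 1 0 ≫ g₀ ≫ Aux17.piM M P := by
          rw [← Category.assoc, ← Category.assoc, cokernel.π_desc, Category.assoc]
end
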